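/- Let (A_ν, B_ν) be sequences of Borel subsets of ℝ² with |A_ν| → 1, |B_ν| → 1, and |tA_ν + (1-t)B_ν| → 1 for a fixed t ∈ (0,1). Suppose 𝟙_{A_ν} → 𝟙_A and 𝟙_{B_ν} → 𝟙_B in L²(ℝ²) for measurable sets A, B (each consisting of its Lebesgue points). Then |tA + (1-t)B| = 1, i.e., the limit pair (A,B) achieves equality in the Brunn–Minkowski inequality. -/

import Mathlib

open MeasureTheory Set Filter Metric
open scoped Pointwise ENNReal Topology NNReal

local notation "E2" => EuclideanSpace ℝ (Fin 2)

lemma bm1_compact {K L : Set ℝ} (hK : IsCompact K) (hL : IsCompact L)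
    (hKne : K.Nonempty) (hLne : L.Nonempty) :
    volume K + volume L ≤ volume (K + L) := by
  set a := sSup K with ha
  set b := sInf L with hb
  have haK : a ∈ K := hK.sSup_mem hKne
  have hbL : b ∈ L := hL.sInf_mem hLne
  set S : Set ℝ := (fun x => b + x) '' K with hS
  set T : Set ℝ := (fun x => a + x) '' L with hT
  have hSsub : S ⊆ K + L := by
    rintro z ⟨x, hx, rfl⟩
    exact Set.mem_add.mpr ⟨x, hx, b, hbL, add_comm x b⟩
  have hTsub : T ⊆ K + L := by
    rintro z ⟨y, hy, rfl⟩
    exact Set.add_mem_add haK hy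
  have hSle : S ⊆ Iic (a + b) := by
    rintro z ⟨x, hx, rfl⟩
    have : x ≤ a := le_csSup hK.bddAbove hx
    simp only [mem_Iic]; linarith
  have hTge : T ⊆ Ici (a + b) := by
    rintro z ⟨y, hy, rfl⟩
    have : b ≤ y := csInf_le hL.bddBelow hy
    simp only [mem_Ici]; linarith
  have hST : S ∩ T ⊆ {a + b} := by
    rintro z ⟨hzS, hzT⟩
    have h1 := hSle hzS
    have h2 := hTge hzT
    simp only [mem_Iic] at h1; simp only [mem_Ici] at h2
    simp [le_antisymm h1 h2]
  have hTmeas : MeasurableSet T := ((hL.image (continuous_add_left a))).measurableSet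
  have hvS : volume S = volume K := by
    rw [hS, Set.image_add_left, measure_preimage_add]
  have hvT : volume T = volume L := by
    rw [hT, Set.image_add_left, measure_preimage_add]
  have key := measure_union_add_inter (μ := volume) S hTmeas
  have hint : volume (S ∩ T) = 0 :=
    le_antisymm ((measure_mono hST).trans (by simp)) (zero_le)
  calc volume K + volume L = volume (S ∪ T) + volume (S ∩ T) := by rw [key, hvS, hvT]
    _ = volume (S ∪ T) := by rw [hint, add_zero]
    _ ≤ volume (K + L) := measure_mono (union_subset hSsub hTsub)

lemma bm1_meas {A B : Set ℝ} (hA : MeasurableSet A) (hB : MeasurableSet B)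
    (hAne : A.Nonempty) (hBne : B.Nonempty) :
    volume A + volume B ≤ volume (A + B) := by
  obtain ⟨a, haA⟩ := hAne
  obtain ⟨b, hbB⟩ := hBne
  have htransA : volume A ≤ volume (A + B) := by
    have : (fun x => x + b) '' A ⊆ A + B := by
      rintro z ⟨x, hx, rfl⟩; exact Set.add_mem_add hx hbB

    calc volume A = volume ((fun x => x + b) '' A) := by
          simp_rw [add_comm _ b]
          rw [Set.image_add_left, measure_preimage_add]
      _ ≤ volume (A + B) := measure_mono this
  have htransB : volume B ≤ volume (A + B) := by
    have : (fun y => a + y) '' B ⊆ A + B := by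
      rintro z ⟨y, hy, rfl⟩; exact Set.add_mem_add haA hy
    calc volume B = volume ((fun y => a + y) '' B) := by
          rw [Set.image_add_left, measure_preimage_add]
      _ ≤ volume (A + B) := measure_mono this
  rcases eq_or_ne (volume A) ⊤ with hAtop | hAtop
  · rw [hAtop] at htransA ⊢
    simp [top_le_iff.mp htransA]
  rcases eq_or_ne (volume B) ⊤ with hBtop | hBtop
  · rw [hBtop] at htransB ⊢
    simp [top_le_iff.mp htransB]
  apply ENNReal.le_of_forall_pos_le_add
  intro ε hε _
  have hε2 : ((ε : ℝ≥0∞) / 2) ≠ 0 := by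
    simp [ENNReal.div_eq_top, (ENNReal.coe_ne_zero.mpr hε.ne')]
  obtain ⟨K, hKA, hKc, hKv⟩ := hA.exists_isCompact_lt_add hAtop hε2
  obtain ⟨L, hLB, hLc, hLv⟩ := hB.exists_isCompact_lt_add hBtop hε2
  set K' : Set ℝ := insert a K with hK'
  set L' : Set ℝ := insert b L with hL'
  have hK'c : IsCompact K' := hKc.insert a
  have hL'c : IsCompact L' := hLc.insert b
  have hK'A : K' ⊆ A := insert_subset haA hKA
  have hL'B : L' ⊆ B := insert_subset hbB hLB
  have h1 : volume A ≤ volume K' + ε / 2 :=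
    (hKv.le.trans (add_le_add_left (measure_mono (subset_insert a K)) _))
  have h2 : volume B ≤ volume L' + ε / 2 :=
    (hLv.le.trans (add_le_add_left (measure_mono (subset_insert b L)) _))
  calc volume A + volume B ≤ (volume K' + ε / 2) + (volume L' + ε / 2) := add_le_add h1 h2
    _ = volume K' + volume L' + ε := by rw [add_add_add_comm, ENNReal.add_halves]
    _ ≤ volume (K' + L') + ε := by
        exact add_le_add_left (bm1_compact hK'c hL'c ⟨a, mem_insert a K⟩ ⟨b, mem_insert b L⟩) _
    _ ≤ volume (A + B) + ε := add_le_add_left (measure_mono (Set.add_subset_add hK'A hL'B)) _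


lemma layercake_enn {α : Type*} [MeasurableSpace α] (μ : Measure α) (f : α → ℝ≥0∞)
    (hf : Measurable f) (c : ℝ≥0∞) (hc : c ≠ ⊤) (hb : ∀ x, f x ≤ c) :
    ∫⁻ x, f x ∂μ = ∫⁻ s in Ioi (0:ℝ), μ {x | ENNReal.ofReal s < f x} := by
  have hfin : ∀ x, f x ≠ ⊤ := fun x => ((hb x).trans_lt hc.lt_top).ne
  have h1 : ∀ x, ENNReal.ofReal ((f x).toReal) = f x := fun x => ENNReal.ofReal_toReal (hfin x)
  have hmble : AEMeasurable (fun x => (f x).toReal) μ :=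
    (ENNReal.measurable_toReal.comp hf).aemeasurable
  have hnn : 0 ≤ᵐ[μ] fun x => (f x).toReal := ae_of_all _ fun x => ENNReal.toReal_nonneg
  have key := lintegral_eq_lintegral_meas_lt μ hnn hmble
  simp_rw [h1] at key
  rw [key]
  apply setLIntegral_congr_fun measurableSet_Ioi
  refine fun s hs => ?_
  refine congrArg μ ?_
  ext x
  simp only [mem_setOf_eq]
  rw [ENNReal.ofReal_lt_iff_lt_toReal (le_of_lt hs) (hfin x)]

lemma geom2 {t : ℝ} (ht : 0 < t) (ht1 : t < 1) (a b : ℝ≥0∞) :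
    a ^ t * b ^ (1 - t) ≤ ENNReal.ofReal t * a + ENNReal.ofReal (1 - t) * b := by
  have h1t : (0:ℝ) < 1 - t := by linarith
  rcases eq_or_ne a ⊤ with rfl | ha
  · have : ENNReal.ofReal t * ⊤ = ⊤ :=
      ENNReal.mul_top (by simp only [ne_eq, ENNReal.ofReal_eq_zero, not_le]; linarith)
    rw [this, top_add]; exact le_top
  rcases eq_or_ne b ⊤ with rfl | hb
  · have : ENNReal.ofReal (1 - t) * ⊤ = ⊤ :=
      ENNReal.mul_top (by simp only [ne_eq, ENNReal.ofReal_eq_zero, not_le]; linarith)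
    rw [this]
    exact le_top.trans (le_of_eq (add_top _).symm)
  lift a to NNReal using ha
  lift b to NNReal using hb
  have hw : t.toNNReal + (1 - t).toNNReal = 1 := by
    rw [← Real.toNNReal_add ht.le h1t.le]
    norm_num
  have key := NNReal.geom_mean_le_arith_mean2_weighted t.toNNReal (1 - t).toNNReal a b hw
  have hc1 : ((t.toNNReal : ℝ)) = t := Real.coe_toNNReal t ht.le
  have hc2 : (((1 - t).toNNReal : ℝ)) = 1 - t := Real.coe_toNNReal _ h1t.le
  rw [hc1, hc2] at key
  calc (a : ℝ≥0∞) ^ t * (b : ℝ≥0∞) ^ (1 - t)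
      = ((a ^ t * b ^ (1 - t) : ℝ≥0) : ℝ≥0∞) := by
        rw [ENNReal.coe_mul, ENNReal.coe_rpow_of_nonneg _ ht.le,
          ENNReal.coe_rpow_of_nonneg _ h1t.le]
    _ ≤ ((t.toNNReal * a + (1 - t).toNNReal * b : ℝ≥0) : ℝ≥0∞) := ENNReal.coe_le_coe.mpr key
    _ = ENNReal.ofReal t * a + ENNReal.ofReal (1 - t) * b := by
        rw [ENNReal.coe_add, ENNReal.coe_mul, ENNReal.coe_mul]
        rw [ENNReal.ofReal, ENNReal.ofReal]

lemma P1_bdd {t : ℝ} (ht : 0 < t) (ht1 : t < 1) (f g h : ℝ → ℝ≥0∞)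
    (hf : Measurable f) (hg : Measurable g) (hh : Measurable h)
    (c : ℝ≥0∞) (hctop : c ≠ ⊤)
    (hfb : ∀ x, f x ≤ c) (hgb : ∀ x, g x ≤ c) (hhb : ∀ x, h x ≤ c)
    (hyp : ∀ x y, f x ^ t * g y ^ (1 - t) ≤ h (t * x + (1 - t) * y)) :
    (∫⁻ x, f x) ^ t * (∫⁻ x, g x) ^ (1 - t) ≤ ∫⁻ x, h x := by
  have h1t : (0:ℝ) < 1 - t := by linarith
  by_cases hMf : (⨆ x, f x) = 0
  · have hf0 : ∀ x, f x = 0 := fun x => le_antisymm ((le_iSup f x).trans_eq hMf) (zero_le)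
    have : ∫⁻ x, f x = 0 := by simp only [hf0, lintegral_const, zero_mul]
    rw [this, ENNReal.zero_rpow_of_pos ht, zero_mul]
    exact zero_le
  by_cases hMg : (⨆ x, g x) = 0
  · have hg0 : ∀ x, g x = 0 := fun x => le_antisymm ((le_iSup g x).trans_eq hMg) (zero_le)
    have : ∫⁻ x, g x = 0 := by simp only [hg0, lintegral_const, zero_mul]
    rw [this, ENNReal.zero_rpow_of_pos h1t, mul_zero]
    exact zero_le
  set Mf := ⨆ x, f x with hMfdef
  set Mg := ⨆ x, g x with hMgdef
  have hMftop : Mf ≠ ⊤ := ((iSup_le hfb).trans_lt hctop.lt_top).ne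
  have hMgtop : Mg ≠ ⊤ := ((iSup_le hgb).trans_lt hctop.lt_top).ne
  set C := Mf ^ t * Mg ^ (1 - t) with hCdef
  have hC0 : C ≠ 0 := by
    apply mul_ne_zero
    · exact (ENNReal.rpow_pos (pos_iff_ne_zero.mpr hMf) hMftop).ne'
    · exact (ENNReal.rpow_pos (pos_iff_ne_zero.mpr hMg) hMgtop).ne'
  have hCtop : C ≠ ⊤ :=
    ENNReal.mul_ne_top (ENNReal.rpow_ne_top_of_nonneg ht.le hMftop)
      (ENNReal.rpow_ne_top_of_nonneg h1t.le hMgtop)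
  set f' : ℝ → ℝ≥0∞ := fun x => f x * Mf⁻¹ with hf'def
  set g' : ℝ → ℝ≥0∞ := fun x => g x * Mg⁻¹ with hg'def
  set h' : ℝ → ℝ≥0∞ := fun x => h x * C⁻¹ with hh'def
  have hf' : Measurable f' := hf.mul_const _
  have hg' : Measurable g' := hg.mul_const _
  have hh' : Measurable h' := hh.mul_const _
  have hf'b : ∀ x, f' x ≤ 1 := fun x => by
    rw [hf'def]
    calc f x * Mf⁻¹ ≤ Mf * Mf⁻¹ := mul_le_mul_left (le_iSup f x) _
      _ = 1 := ENNReal.mul_inv_cancel hMf hMftop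
  have hg'b : ∀ x, g' x ≤ 1 := fun x => by
    rw [hg'def]
    calc g x * Mg⁻¹ ≤ Mg * Mg⁻¹ := mul_le_mul_left (le_iSup g x) _
      _ = 1 := ENNReal.mul_inv_cancel hMg hMgtop
  have hh'b : ∀ x, h' x ≤ c * C⁻¹ := fun x => mul_le_mul_left (hhb x) _
  have hCinvtop : c * C⁻¹ ≠ ⊤ :=
    ENNReal.mul_ne_top hctop (ENNReal.inv_ne_top.mpr hC0)
  -- distribution functions
  set F : ℝ → ℝ≥0∞ := fun s => volume {x | ENNReal.ofReal s < f' x} with hFdef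
  set G : ℝ → ℝ≥0∞ := fun s => volume {x | ENNReal.ofReal s < g' x} with hGdef
  set H : ℝ → ℝ≥0∞ := fun s => volume {x | ENNReal.ofReal s < h' x} with hHdef
  have hFanti : Antitone F := fun s s' hss' =>
    measure_mono fun x hx => lt_of_le_of_lt (ENNReal.ofReal_le_ofReal hss') hx
  have hGanti : Antitone G := fun s s' hss' =>
    measure_mono fun x hx => lt_of_le_of_lt (ENNReal.ofReal_le_ofReal hss') hx
  have hFm : Measurable F := hFanti.measurable
  have hGm : Measurable G := hGanti.measurable
  -- key level-set inequality
  have key : ∀ s : ℝ, 0 < s →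
      ENNReal.ofReal t * F s + ENNReal.ofReal (1 - t) * G s ≤ H s := by
    intro s hs
    by_cases hs1 : s < 1
    · -- nontrivial case
      set X := {x | ENNReal.ofReal s * Mf < f x} with hXdef
      set Y := {x | ENNReal.ofReal s * Mg < g x} with hYdef
      set Z := {x | ENNReal.ofReal s * C < h x} with hZdef
      have hFX : F s = volume X := by
        show volume {x : ℝ | ENNReal.ofReal s < f' x} = volume X
        congr 1
        ext x
        simp only [hf'def, mem_setOf_eq, hXdef]
        rw [← div_eq_mul_inv, ENNReal.lt_div_iff_mul_lt (Or.inl hMf) (Or.inl hMftop)]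
      have hGY : G s = volume Y := by
        show volume {x : ℝ | ENNReal.ofReal s < g' x} = volume Y
        congr 1
        ext x
        simp only [hg'def, mem_setOf_eq, hYdef]
        rw [← div_eq_mul_inv, ENNReal.lt_div_iff_mul_lt (Or.inl hMg) (Or.inl hMgtop)]
      have hHZ : H s = volume Z := by
        show volume {x : ℝ | ENNReal.ofReal s < h' x} = volume Z
        congr 1
        ext x
        simp only [hh'def, mem_setOf_eq, hZdef]
        rw [← div_eq_mul_inv, ENNReal.lt_div_iff_mul_lt (Or.inl hC0) (Or.inl hCtop)]
      have hXm : MeasurableSet X := measurableSet_lt measurable_const hf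
      have hYm : MeasurableSet Y := measurableSet_lt measurable_const hg
      have hXne : X.Nonempty := by
        have hlt : ENNReal.ofReal s * Mf < Mf := by
          calc ENNReal.ofReal s * Mf < 1 * Mf := by
                rw [ENNReal.mul_lt_mul_iff_left hMf hMftop]
                exact ENNReal.ofReal_lt_one.mpr hs1
            _ = Mf := one_mul _
        obtain ⟨x, hx⟩ := lt_iSup_iff.mp hlt
        exact ⟨x, hx⟩
      have hYne : Y.Nonempty := by
        have hlt : ENNReal.ofReal s * Mg < Mg := by
          calc ENNReal.ofReal s * Mg < 1 * Mg := by
                rw [ENNReal.mul_lt_mul_iff_left hMg hMgtop]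
                exact ENNReal.ofReal_lt_one.mpr hs1
            _ = Mg := one_mul _
        obtain ⟨x, hx⟩ := lt_iSup_iff.mp hlt
        exact ⟨x, hx⟩
      have hsne : ENNReal.ofReal s ≠ 0 := by simp [hs]
      have hstop : ENNReal.ofReal s ≠ ⊤ := ENNReal.ofReal_ne_top
      -- the inclusion
      have hincl : t • X + (1 - t) • Y ⊆ Z := by
        rintro z ⟨u, ⟨x, hx, rfl⟩, v, ⟨y, hy, rfl⟩, rfl⟩
        simp only [hZdef, mem_setOf_eq, smul_eq_mul]
        have e1 : ENNReal.ofReal s * C = (ENNReal.ofReal s * Mf) ^ t *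
            (ENNReal.ofReal s * Mg) ^ (1 - t) := by
          rw [ENNReal.mul_rpow_of_nonneg _ _ ht.le, ENNReal.mul_rpow_of_nonneg _ _ h1t.le,
            hCdef]
          rw [show ENNReal.ofReal s ^ t * Mf ^ t * (ENNReal.ofReal s ^ (1 - t) * Mg ^ (1 - t))
            = (ENNReal.ofReal s ^ t * ENNReal.ofReal s ^ (1 - t)) * (Mf ^ t * Mg ^ (1 - t)) by ring]
          rw [← ENNReal.rpow_add t (1 - t) hsne hstop]
          norm_num
        rw [e1]
        have hx' : (ENNReal.ofReal s * Mf) ^ t < f x ^ t := ENNReal.rpow_lt_rpow hx ht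
        have hy' : (ENNReal.ofReal s * Mg) ^ (1 - t) ≤ g y ^ (1 - t) :=
          ENNReal.rpow_le_rpow hy.le h1t.le
        have hne0 : (ENNReal.ofReal s * Mg) ^ (1 - t) ≠ 0 :=
          (ENNReal.rpow_pos (ENNReal.mul_pos hsne hMg) (ENNReal.mul_ne_top hstop hMgtop)).ne'
        have hnetop : (ENNReal.ofReal s * Mg) ^ (1 - t) ≠ ⊤ :=
          ENNReal.rpow_ne_top_of_nonneg h1t.le (ENNReal.mul_ne_top hstop hMgtop)
        calc (ENNReal.ofReal s * Mf) ^ t * (ENNReal.ofReal s * Mg) ^ (1 - t)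
            < f x ^ t * (ENNReal.ofReal s * Mg) ^ (1 - t) := by
              rw [ENNReal.mul_lt_mul_iff_left hne0 hnetop]; exact hx'
          _ ≤ f x ^ t * g y ^ (1 - t) := mul_le_mul_right hy' _
          _ ≤ h (t * x + (1 - t) * y) := hyp x y
      -- measures of dilates
      have hdim : (Module.finrank ℝ ℝ) = 1 := Module.finrank_self ℝ
      have hvX : volume (t • X) = ENNReal.ofReal t * volume X := by
        rw [Measure.addHaar_smul, hdim, pow_one, abs_of_pos ht]
      have hvY : volume ((1 - t) • Y) = ENNReal.ofReal (1 - t) * volume Y := by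
        rw [Measure.addHaar_smul, hdim, pow_one, abs_of_pos h1t]
      have hXsm : MeasurableSet (t • X) := hXm.const_smul₀ t
      have hYsm : MeasurableSet ((1 - t) • Y) := hYm.const_smul₀ (1 - t)
      have hXsne : (t • X).Nonempty := hXne.smul_set
      have hYsne : ((1 - t) • Y).Nonempty := hYne.smul_set
      calc ENNReal.ofReal t * F s + ENNReal.ofReal (1 - t) * G s
          = volume (t • X) + volume ((1 - t) • Y) := by rw [hFX, hGY, hvX, hvY]
        _ ≤ volume (t • X + (1 - t) • Y) := bm1_meas hXsm hYsm hXsne hYsne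
        _ ≤ volume Z := measure_mono hincl
        _ = H s := hHZ.symm
    · -- trivial case s ≥ 1
      push_neg at hs1
      have hF0 : F s = 0 := by
        have hempty : {x : ℝ | ENNReal.ofReal s < f' x} = (∅ : Set ℝ) := by
          ext x
          simp only [mem_setOf_eq, mem_empty_iff_false, iff_false, not_lt]
          exact (hf'b x).trans (by simpa using ENNReal.one_le_ofReal.mpr hs1)
        show volume {x : ℝ | ENNReal.ofReal s < f' x} = 0
        rw [hempty, measure_empty]
      have hG0 : G s = 0 := by
        have hempty : {x : ℝ | ENNReal.ofReal s < g' x} = (∅ : Set ℝ) := by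
          ext x
          simp only [mem_setOf_eq, mem_empty_iff_false, iff_false, not_lt]
          exact (hg'b x).trans (by simpa using ENNReal.one_le_ofReal.mpr hs1)
        show volume {x : ℝ | ENNReal.ofReal s < g' x} = 0
        rw [hempty, measure_empty]
      rw [hF0, hG0, mul_zero, mul_zero, add_zero]
      exact zero_le
  -- integrate the level-set inequality
  have intf' : ∫⁻ x, f' x = ∫⁻ s in Ioi (0:ℝ), F s :=
    layercake_enn volume f' hf' 1 ENNReal.one_ne_top hf'b
  have intg' : ∫⁻ x, g' x = ∫⁻ s in Ioi (0:ℝ), G s :=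
    layercake_enn volume g' hg' 1 ENNReal.one_ne_top hg'b
  have inth' : ∫⁻ x, h' x = ∫⁻ s in Ioi (0:ℝ), H s :=
    layercake_enn volume h' hh' (c * C⁻¹) hCinvtop hh'b
  have step : ENNReal.ofReal t * (∫⁻ x, f' x) + ENNReal.ofReal (1 - t) * (∫⁻ x, g' x)
      ≤ ∫⁻ x, h' x := by
    rw [intf', intg', inth']
    rw [← lintegral_const_mul _ hFm, ← lintegral_const_mul _ hGm]
    rw [← lintegral_add_left (hFm.const_mul _)]
    refine lintegral_mono_ae ?_
    filter_upwards [ae_restrict_mem measurableSet_Ioi] with s hs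
    exact key s hs
  have geom : (∫⁻ x, f' x) ^ t * (∫⁻ x, g' x) ^ (1 - t) ≤ ∫⁻ x, h' x :=
    (geom2 ht ht1 _ _).trans step
  -- unnormalize
  have ef : ∫⁻ x, f' x = (∫⁻ x, f x) * Mf⁻¹ := lintegral_mul_const _ hf
  have eg : ∫⁻ x, g' x = (∫⁻ x, g x) * Mg⁻¹ := lintegral_mul_const _ hg
  have eh : ∫⁻ x, h' x = (∫⁻ x, h x) * C⁻¹ := lintegral_mul_const _ hh
  rw [ef, eg, eh] at geom
  have expand : ((∫⁻ x, f x) * Mf⁻¹) ^ t * ((∫⁻ x, g x) * Mg⁻¹) ^ (1 - t)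
      = ((∫⁻ x, f x) ^ t * (∫⁻ x, g x) ^ (1 - t)) * C⁻¹ := by
    rw [ENNReal.mul_rpow_of_nonneg _ _ ht.le, ENNReal.mul_rpow_of_nonneg _ _ h1t.le,
      ENNReal.inv_rpow, ENNReal.inv_rpow, hCdef,
      ENNReal.mul_inv (Or.inl (ENNReal.rpow_pos (pos_iff_ne_zero.mpr hMf) hMftop).ne')
        (Or.inl (ENNReal.rpow_ne_top_of_nonneg ht.le hMftop))]
    ring
  rw [expand] at geom
  rwa [ENNReal.mul_le_mul_iff_left (ENNReal.inv_ne_zero.mpr hCtop)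
    (ENNReal.inv_ne_top.mpr hC0)] at geom


lemma iSup_min_nat (a : ℝ≥0∞) : ⨆ n : ℕ, min a n = a := by
  apply le_antisymm (iSup_le fun n => min_le_left _ _)
  rcases eq_or_ne a ⊤ with rfl | ha
  · have hmin : ∀ n : ℕ, min (⊤:ℝ≥0∞) (n:ℝ≥0∞) = (n:ℝ≥0∞) := fun n => min_eq_right le_top
    simp only [hmin]
    rw [ENNReal.iSup_natCast]
  · obtain ⟨n, hn⟩ := ENNReal.exists_nat_gt ha
    calc a = min a n := (min_eq_left hn.le).symm
      _ ≤ ⨆ n : ℕ, min a (n:ℝ≥0∞) := le_iSup (fun n : ℕ => min a (n:ℝ≥0∞)) n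

lemma P1 {t : ℝ} (ht : 0 < t) (ht1 : t < 1) (f g h : ℝ → ℝ≥0∞)
    (hf : Measurable f) (hg : Measurable g) (hh : Measurable h)
    (hyp : ∀ x y, f x ^ t * g y ^ (1 - t) ≤ h (t * x + (1 - t) * y)) :
    (∫⁻ x, f x) ^ t * (∫⁻ x, g x) ^ (1 - t) ≤ ∫⁻ x, h x := by
  have h1t : (0:ℝ) < 1 - t := by linarith
  -- truncations
  set fn : ℕ → ℝ → ℝ≥0∞ := fun n x => min (f x) n with hfn
  set gn : ℕ → ℝ → ℝ≥0∞ := fun n x => min (g x) n with hgn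
  set hn : ℕ → ℝ → ℝ≥0∞ := fun n x => min (h x) n with hhn
  have key : ∀ n : ℕ, (∫⁻ x, fn n x) ^ t * (∫⁻ x, gn n x) ^ (1 - t) ≤ ∫⁻ x, h x := by
    intro n
    have hb : ∀ x y, fn n x ^ t * gn n y ^ (1 - t) ≤ hn n (t * x + (1 - t) * y) := by
      intro x y
      refine le_min ?_ ?_
      · exact le_trans (mul_le_mul' (ENNReal.rpow_le_rpow (min_le_left _ _) ht.le)
          (ENNReal.rpow_le_rpow (min_le_left _ _) h1t.le)) (hyp x y)
      · calc fn n x ^ t * gn n y ^ (1 - t)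
            ≤ (n : ℝ≥0∞) ^ t * (n : ℝ≥0∞) ^ (1 - t) := by
              exact mul_le_mul' (ENNReal.rpow_le_rpow (min_le_right _ _) ht.le)
                (ENNReal.rpow_le_rpow (min_le_right _ _) h1t.le)
          _ = (n : ℝ≥0∞) ^ (t + (1 - t)) := (ENNReal.rpow_add_of_nonneg _ _ ht.le h1t.le).symm
          _ = (n : ℝ≥0∞) := by norm_num
    have := P1_bdd ht ht1 (fn n) (gn n) (hn n)
      (hf.min measurable_const) (hg.min measurable_const) (hh.min measurable_const)
      (n : ℝ≥0∞) (ENNReal.natCast_ne_top n)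
      (fun x => min_le_right _ _) (fun x => min_le_right _ _) (fun x => min_le_right _ _) hb
    exact this.trans (lintegral_mono fun x => min_le_left _ _)
  -- pass to the limit
  have limf : (⨆ n : ℕ, ∫⁻ x, fn n x) = ∫⁻ x, f x := by
    rw [← lintegral_iSup (fun n => hf.min measurable_const)
      (fun n m hnm x => min_le_min le_rfl (by exact_mod_cast Nat.cast_le.mpr hnm))]
    congr 1
    ext x
    exact iSup_min_nat (f x)
  have limg : (⨆ n : ℕ, ∫⁻ x, gn n x) = ∫⁻ x, g x := by
    rw [← lintegral_iSup (fun n => hg.min measurable_const)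
      (fun n m hnm x => min_le_min le_rfl (by exact_mod_cast Nat.cast_le.mpr hnm))]
    congr 1
    ext x
    exact iSup_min_nat (g x)
  have monof : Monotone fun n : ℕ => ∫⁻ x, fn n x := fun n m hnm =>
    lintegral_mono fun x => min_le_min le_rfl (by exact_mod_cast Nat.cast_le.mpr hnm)
  have monog : Monotone fun n : ℕ => ∫⁻ x, gn n x := fun n m hnm =>
    lintegral_mono fun x => min_le_min le_rfl (by exact_mod_cast Nat.cast_le.mpr hnm)
  by_cases hF0 : (∫⁻ x, f x) = 0
  · rw [hF0, ENNReal.zero_rpow_of_pos ht, zero_mul]; exact zero_le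
  by_cases hG0 : (∫⁻ x, g x) = 0
  · rw [hG0, ENNReal.zero_rpow_of_pos h1t, mul_zero]; exact zero_le
  have tf : Tendsto (fun n : ℕ => ∫⁻ x, fn n x) atTop (𝓝 (∫⁻ x, f x)) := by
    rw [← limf]; exact tendsto_atTop_iSup monof
  have tg : Tendsto (fun n : ℕ => ∫⁻ x, gn n x) atTop (𝓝 (∫⁻ x, g x)) := by
    rw [← limg]; exact tendsto_atTop_iSup monog
  have trf : Tendsto (fun n : ℕ => (∫⁻ x, fn n x) ^ t) atTop (𝓝 ((∫⁻ x, f x) ^ t)) :=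
    (ENNReal.continuous_rpow_const.tendsto _).comp tf
  have trg : Tendsto (fun n : ℕ => (∫⁻ x, gn n x) ^ (1 - t)) atTop
      (𝓝 ((∫⁻ x, g x) ^ (1 - t))) :=
    (ENNReal.continuous_rpow_const.tendsto _).comp tg
  have hprod : Tendsto (fun n : ℕ => (∫⁻ x, fn n x) ^ t * (∫⁻ x, gn n x) ^ (1 - t)) atTop
      (𝓝 ((∫⁻ x, f x) ^ t * (∫⁻ x, g x) ^ (1 - t))) := by
    apply ENNReal.Tendsto.mul trf ?_ trg ?_
    · left
      intro hc
      rw [ENNReal.rpow_eq_zero_iff] at hc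
      rcases hc with ⟨h0, _⟩ | ⟨_, hlt⟩
      · exact hF0 h0
      · linarith
    · left
      intro hc
      rw [ENNReal.rpow_eq_zero_iff] at hc
      rcases hc with ⟨h0, _⟩ | ⟨_, hlt⟩
      · exact hG0 h0
      · linarith
  exact le_of_tendsto hprod (Eventually.of_forall key)

-- 2D Prékopa–Leindler on ℝ × ℝ
lemma P2 {t : ℝ} (ht : 0 < t) (ht1 : t < 1) (f g h : ℝ × ℝ → ℝ≥0∞)
    (hf : Measurable f) (hg : Measurable g) (hh : Measurable h)
    (hyp : ∀ x y : ℝ × ℝ, f x ^ t * g y ^ (1 - t) ≤ h (t • x + (1 - t) • y)) :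
    (∫⁻ x, f x) ^ t * (∫⁻ x, g x) ^ (1 - t) ≤ ∫⁻ x, h x := by
  have h1t : (0:ℝ) < 1 - t := by linarith
  set F : ℝ → ℝ≥0∞ := fun x2 => ∫⁻ x1, f (x1, x2) with hF
  set G : ℝ → ℝ≥0∞ := fun y2 => ∫⁻ y1, g (y1, y2) with hG
  set H : ℝ → ℝ≥0∞ := fun z2 => ∫⁻ z1, h (z1, z2) with hH
  have hFm : Measurable F := by
    apply Measurable.lintegral_prod_right (f := fun x2 x1 => f (x1, x2))
    exact hf.comp (measurable_swap)
  have hGm : Measurable G := by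
    apply Measurable.lintegral_prod_right (f := fun x2 x1 => g (x1, x2))
    exact hg.comp (measurable_swap)
  have hHm : Measurable H := by
    apply Measurable.lintegral_prod_right (f := fun x2 x1 => h (x1, x2))
    exact hh.comp (measurable_swap)
  have inner : ∀ x2 y2 : ℝ, F x2 ^ t * G y2 ^ (1 - t) ≤ H (t * x2 + (1 - t) * y2) := by
    intro x2 y2
    apply P1 ht ht1 (fun x1 => f (x1, x2)) (fun y1 => g (y1, y2))
      (fun z1 => h (z1, t * x2 + (1 - t) * y2))
      (hf.comp (measurable_id.prodMk measurable_const))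
      (hg.comp (measurable_id.prodMk measurable_const))
      (hh.comp (measurable_id.prodMk measurable_const))
    intro x1 y1
    have := hyp (x1, x2) (y1, y2)
    simpa [Prod.smul_mk, Prod.mk_add_mk, smul_eq_mul] using this
  have outer := P1 ht ht1 F G H hFm hGm hHm inner
  have ef : ∫⁻ x2, F x2 = ∫⁻ x, f x := by
    rw [hF, Measure.volume_eq_prod, lintegral_prod_symm _ hf.aemeasurable]
  have eg : ∫⁻ y2, G y2 = ∫⁻ x, g x := by
    rw [hG, Measure.volume_eq_prod, lintegral_prod_symm _ hg.aemeasurable]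
  have eh : ∫⁻ z2, H z2 = ∫⁻ x, h x := by
    rw [hH, Measure.volume_eq_prod, lintegral_prod_symm _ hh.aemeasurable]
  rw [ef, eg, eh] at outer
  exact outer


noncomputable def φeq : EuclideanSpace ℝ (Fin 2) ≃ᵐ (ℝ × ℝ) :=
  (MeasurableEquiv.toLp 2 (Fin 2 → ℝ)).symm.trans MeasurableEquiv.finTwoArrow

lemma φeq_mp : MeasurePreserving (⇑φeq) volume volume := by
  have := (volume_preserving_finTwoArrow ℝ).comp
    (EuclideanSpace.volume_preserving_symm_measurableEquiv_toLp (Fin 2))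
  rw [φeq, MeasurableEquiv.coe_trans]
  exact this

lemma φeq_apply (x : E2) : φeq x = (x 0, x 1) := rfl

lemma φeq_add (x y : E2) : φeq (x + y) = φeq x + φeq y := by
  simp [φeq_apply, Prod.mk_add_mk]

lemma φeq_smul (c : ℝ) (x : E2) : φeq (c • x) = c • φeq x := by
  simp [φeq_apply, Prod.smul_mk]

lemma φeq_image_add (A B : Set E2) : φeq '' (A + B) = φeq '' A + φeq '' B := by
  ext z
  simp only [Set.mem_image, Set.mem_add]
  constructor
  · rintro ⟨w, ⟨a, ha, b, hb, rfl⟩, rfl⟩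
    exact ⟨φeq a, ⟨a, ha, rfl⟩, φeq b, ⟨b, hb, rfl⟩, (φeq_add a b).symm⟩
  · rintro ⟨u, ⟨a, ha, rfl⟩, v, ⟨b, hb, rfl⟩, rfl⟩
    exact ⟨a + b, ⟨a, ha, b, hb, rfl⟩, φeq_add a b⟩

lemma φeq_image_smul (c : ℝ) (A : Set E2) : φeq '' (c • A) = c • (φeq '' A) := by
  ext z
  simp only [Set.mem_image, Set.mem_smul_set]
  constructor
  · rintro ⟨w, ⟨a, ha, rfl⟩, rfl⟩
    exact ⟨φeq a, ⟨a, ha, rfl⟩, (φeq_smul c a).symm⟩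
  · rintro ⟨u, ⟨a, ha, rfl⟩, rfl⟩
    exact ⟨c • a, ⟨a, ha, rfl⟩, φeq_smul c a⟩

lemma φeq_vol (S : Set E2) (hS : MeasurableSet S) : volume (φeq '' S) = volume S := by
  rw [MeasurableEquiv.image_eq_preimage_symm]
  exact (φeq_mp.symm φeq).measure_preimage hS.nullMeasurableSet

lemma φeq_meas (S : Set E2) (hS : MeasurableSet S) : MeasurableSet (φeq '' S) := by
  rw [MeasurableEquiv.image_eq_preimage_symm]
  exact φeq.symm.measurable hS

lemma bm2 {t : ℝ} (ht : 0 < t) (ht1 : t < 1) (K L : Set E2)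
    (hK : IsCompact K) (hL : IsCompact L) :
    (volume K) ^ t * (volume L) ^ (1 - t) ≤ volume (t • K + (1 - t) • L) := by
  have h1t : (0:ℝ) < 1 - t := by linarith
  set S : Set E2 := t • K + (1 - t) • L with hSdef
  have hScompact : IsCompact S := (hK.smul t).add (hL.smul (1 - t))
  set fK : ℝ × ℝ → ℝ≥0∞ := (φeq '' K).indicator 1 with hfK
  set fL : ℝ × ℝ → ℝ≥0∞ := (φeq '' L).indicator 1 with hfL
  set fS : ℝ × ℝ → ℝ≥0∞ := (φeq '' S).indicator 1 with hfS
  have hmK := φeq_meas K hK.measurableSet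
  have hmL := φeq_meas L hL.measurableSet
  have hmS := φeq_meas S hScompact.measurableSet
  have hyp : ∀ x y : ℝ × ℝ, fK x ^ t * fL y ^ (1 - t) ≤ fS (t • x + (1 - t) • y) := by
    intro x y
    by_cases hx : x ∈ φeq '' K
    · by_cases hy : y ∈ φeq '' L
      · obtain ⟨a, ha, rfl⟩ := hx
        obtain ⟨b, hb, rfl⟩ := hy
        have hmem : t • φeq a + (1 - t) • φeq b ∈ φeq '' S := by
          rw [← φeq_smul, ← φeq_smul, ← φeq_add]
          exact ⟨t • a + (1 - t) • b,
            Set.add_mem_add (Set.smul_mem_smul_set ha) (Set.smul_mem_smul_set hb), rfl⟩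
        simp [hfK, hfL, hfS, Set.indicator_of_mem, ha, hb, hmem,
          Set.mem_image_of_mem, ENNReal.one_rpow]
      · simp [hfL, Set.indicator_of_notMem hy, ENNReal.zero_rpow_of_pos h1t]
    · simp [hfK, Set.indicator_of_notMem hx, ENNReal.zero_rpow_of_pos ht]
  have key := P2 ht ht1 fK fL fS
    (measurable_const.indicator hmK) (measurable_const.indicator hmL)
    (measurable_const.indicator hmS) hyp
  rw [hfK, hfL, hfS] at key
  rw [lintegral_indicator_one hmK, lintegral_indicator_one hmL,
    lintegral_indicator_one hmS] at key
  rw [φeq_vol K hK.measurableSet, φeq_vol L hL.measurableSet,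
    φeq_vol S hScompact.measurableSet] at key
  exact key

lemma lower_bound {t : ℝ} (ht : 0 < t) (ht1 : t < 1) (A B : Set E2)
    (hAm : MeasurableSet A) (hBm : MeasurableSet B)
    (hA1 : volume A = 1) (hB1 : volume B = 1) :
    1 ≤ volume (t • A + (1 - t) • B) := by
  have h1t : (0:ℝ) < 1 - t := by linarith
  apply ENNReal.le_of_forall_pos_le_add
  intro ε hε _
  by_cases hε1 : (1:ℝ≥0∞) ≤ (ε : ℝ≥0∞)
  · exact le_add_of_nonneg_of_le (zero_le) hε1
  push_neg at hε1
  have hδ : ((ε : ℝ≥0∞) / 2) ≠ 0 := by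
    simp [ENNReal.div_eq_top, ENNReal.coe_ne_zero.mpr hε.ne']
  obtain ⟨K, hKA, hKc, hKv⟩ := hAm.exists_isCompact_lt_add (by rw [hA1]; exact ENNReal.one_ne_top) hδ
  obtain ⟨L, hLB, hLc, hLv⟩ := hBm.exists_isCompact_lt_add (by rw [hB1]; exact ENNReal.one_ne_top) hδ
  rw [hA1] at hKv
  rw [hB1] at hLv
  set δ : ℝ≥0∞ := (ε : ℝ≥0∞) / 2 with hδdef
  have hKge : 1 - δ ≤ volume K := by
    rw [tsub_le_iff_right]; exact hKv.le
  have hLge : 1 - δ ≤ volume L := by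
    rw [tsub_le_iff_right]; exact hLv.le
  have hbase : (1 - δ : ℝ≥0∞) = (1 - δ) ^ t * (1 - δ) ^ (1 - t) := by
    rw [← ENNReal.rpow_add_of_nonneg t (1 - t) ht.le h1t.le]
    norm_num
  have step : (1 - δ : ℝ≥0∞) ≤ volume (t • A + (1 - t) • B) := by
    calc (1 - δ : ℝ≥0∞) = (1 - δ) ^ t * (1 - δ) ^ (1 - t) := hbase
      _ ≤ (volume K) ^ t * (volume L) ^ (1 - t) :=
          mul_le_mul' (ENNReal.rpow_le_rpow hKge ht.le) (ENNReal.rpow_le_rpow hLge h1t.le)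
      _ ≤ volume (t • K + (1 - t) • L) := bm2 ht ht1 K L hKc hLc
      _ ≤ volume (t • A + (1 - t) • B) := by
          apply measure_mono
          exact Set.add_subset_add (Set.smul_set_mono hKA) (Set.smul_set_mono hLB)
  have hδε : δ ≤ (ε : ℝ≥0∞) := ENNReal.half_le_self
  calc (1:ℝ≥0∞) = (1 - δ) + δ := by
        rw [tsub_add_cancel_of_le]
        calc δ ≤ (ε:ℝ≥0∞) := hδε
          _ ≤ 1 := hε1.le
    _ ≤ volume (t • A + (1 - t) • B) + ε := add_le_add step hδε


-- (E1) volume of symmetric difference via L² norm of indicator difference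
lemma symm_vol (E F : Set E2) (hE : MeasurableSet E) (hF : MeasurableSet F) :
    volume (symmDiff E F) =
      (eLpNorm (E.indicator (fun _ => (1:ℝ)) - F.indicator (fun _ => (1:ℝ))) 2 volume)
        ^ (2:ℝ) := by
  have hmeas : MeasurableSet (symmDiff E F) := (hE.diff hF).union (hF.diff hE)
  have hpt : (fun x => (‖(E.indicator (fun _ => (1:ℝ)) - F.indicator (fun _ => (1:ℝ))) x‖₊
      : ℝ≥0∞) ^ (2:ℝ)) = (symmDiff E F).indicator 1 := by
    funext x
    simp only [Pi.sub_apply, Set.indicator_apply, Set.mem_symmDiff]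
    by_cases hx1 : x ∈ E <;> by_cases hx2 : x ∈ F <;>
      simp [Set.indicator_apply, Set.mem_symmDiff, hx1, hx2,
        ENNReal.zero_rpow_of_pos, ENNReal.one_rpow]
  have := eLpNorm_eq_lintegral_rpow_enorm_toReal (f := (E.indicator (fun _ => (1:ℝ))
      - F.indicator (fun _ => (1:ℝ)))) (μ := volume) two_ne_zero ENNReal.ofNat_ne_top
  rw [this]
  rw [show ((2:ℝ≥0∞).toReal) = (2:ℝ) by simp]
  simp only [enorm_eq_nnnorm]
  rw [hpt, lintegral_indicator_one hmeas]
  rw [← ENNReal.rpow_mul]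
  norm_num

-- (E2) from L² convergence, symmetric-difference volumes tend to 0
lemma symm_tendsto (A : Set E2) (Aν : ℕ → Set E2) (hAm : MeasurableSet A)
    (hAνm : ∀ ν, MeasurableSet (Aν ν))
    (hconv : Tendsto (fun ν =>
        eLpNorm ((Aν ν).indicator (fun _ => (1:ℝ)) - A.indicator (fun _ => (1:ℝ))) 2 volume)
      atTop (𝓝 0)) :
    Tendsto (fun ν => volume (symmDiff (Aν ν) A)) atTop (𝓝 0) := by
  have heq : ∀ ν, volume (symmDiff (Aν ν) A) =
      (eLpNorm ((Aν ν).indicator (fun _ => (1:ℝ)) - A.indicator (fun _ => (1:ℝ))) 2 volume)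
        ^ (2:ℝ) := fun ν => symm_vol (Aν ν) A (hAνm ν) hAm
  simp_rw [heq]
  have : Tendsto (fun ν =>
      (eLpNorm ((Aν ν).indicator (fun _ => (1:ℝ)) - A.indicator (fun _ => (1:ℝ))) 2 volume)
        * (eLpNorm ((Aν ν).indicator (fun _ => (1:ℝ)) - A.indicator (fun _ => (1:ℝ))) 2 volume))
      atTop (𝓝 0) := by
    have := ENNReal.Tendsto.mul hconv (Or.inr ENNReal.zero_ne_top) hconv
      (Or.inr ENNReal.zero_ne_top)
    simpa using this
  refine this.congr fun ν => ?_
  rw [show (2:ℝ) = ((2:ℕ):ℝ) by norm_num, ENNReal.rpow_natCast, pow_two]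

-- (E3) measure limit gives volume = 1
lemma vol_eq_one (A : Set E2) (Aν : ℕ → Set E2)
    (hA1 : Tendsto (fun ν => (volume (Aν ν)).toReal) atTop (𝓝 1))
    (hΔ : Tendsto (fun ν => volume (symmDiff (Aν ν) A)) atTop (𝓝 0)) :
    volume A = 1 := by
  have hsub1 : ∀ ν, A ⊆ Aν ν ∪ symmDiff (Aν ν) A := by
    intro ν x hx
    by_cases hxν : x ∈ Aν ν
    · exact Or.inl hxν
    · exact Or.inr (Set.mem_symmDiff.mpr (Or.inr ⟨hx, hxν⟩))
  have hsub2 : ∀ ν, Aν ν ⊆ A ∪ symmDiff (Aν ν) A := by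
    intro ν x hx
    by_cases hxA : x ∈ A
    · exact Or.inl hxA
    · exact Or.inr (Set.mem_symmDiff.mpr (Or.inl ⟨hx, hxA⟩))
  have hb1 : ∀ ν, volume A ≤ volume (Aν ν) + volume (symmDiff (Aν ν) A) :=
    fun ν => (measure_mono (hsub1 ν)).trans (measure_union_le _ _)
  have hb2 : ∀ ν, volume (Aν ν) ≤ volume A + volume (symmDiff (Aν ν) A) :=
    fun ν => (measure_mono (hsub2 ν)).trans (measure_union_le _ _)
  have hνfin : ∀ᶠ ν in atTop, volume (Aν ν) ≠ ⊤ := by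
    filter_upwards [hA1.eventually (eventually_gt_nhds (by norm_num : (1/2:ℝ) < 1))] with ν hν
    intro htop
    rw [htop] at hν
    norm_num at hν
  have hΔfin : ∀ᶠ ν in atTop, volume (symmDiff (Aν ν) A) < 1 :=
    hΔ.eventually (eventually_lt_nhds zero_lt_one)
  have hAfin : volume A ≠ ⊤ := by
    obtain ⟨ν, hν1, hν2⟩ := (hνfin.and hΔfin).exists
    intro htop
    have := hb1 ν
    rw [htop] at this
    exact ENNReal.add_ne_top.mpr ⟨hν1, hν2.ne_top⟩ (top_le_iff.mp this)
  -- real-valued estimates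
  have hreal : ∀ᶠ ν in atTop,
      |(volume (Aν ν)).toReal - (volume A).toReal| ≤ (volume (symmDiff (Aν ν) A)).toReal := by
    filter_upwards [hνfin, hΔfin] with ν h1 h2
    rw [abs_sub_le_iff]
    constructor
    · have := hb2 ν
      have h3 := ENNReal.toReal_mono (ENNReal.add_ne_top.mpr ⟨hAfin, h2.ne_top⟩) this
      rw [ENNReal.toReal_add hAfin h2.ne_top] at h3
      linarith
    · have := hb1 ν
      have h3 := ENNReal.toReal_mono (ENNReal.add_ne_top.mpr ⟨h1, h2.ne_top⟩) this
      rw [ENNReal.toReal_add h1 h2.ne_top] at h3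
      linarith
  have hΔreal : Tendsto (fun ν => (volume (symmDiff (Aν ν) A)).toReal) atTop (𝓝 0) := by
    have := (ENNReal.tendsto_toReal (by simp : (0:ℝ≥0∞) ≠ ⊤)).comp hΔ
    simpa [Function.comp_def] using this
  have habs : Tendsto (fun ν => |(volume (Aν ν)).toReal - (volume A).toReal|) atTop (𝓝 0) :=
    squeeze_zero' (Eventually.of_forall fun ν => abs_nonneg _) hreal hΔreal
  have hlim : Tendsto (fun ν => (volume (Aν ν)).toReal) atTop (𝓝 (volume A).toReal) := by
    rw [tendsto_iff_dist_tendsto_zero]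
    simpa [Real.dist_eq] using habs
  have h1 : (volume A).toReal = 1 := tendsto_nhds_unique hlim hA1
  rw [← ENNReal.ofReal_toReal hAfin, h1, ENNReal.ofReal_one]


noncomputable def aff (v : E2) (c : ℝ) : E2 → E2 := fun y => v + c • y

lemma aff_inj (v : E2) {c : ℝ} (hc : c ≠ 0) : Function.Injective (aff v c) := by
  intro a b hab
  have := add_left_cancel hab
  exact smul_right_injective _ hc this

lemma aff_image_eq_preimage (v : E2) {c : ℝ} (hc : c ≠ 0) (S : Set E2) :
    aff v c '' S = (fun z => c⁻¹ • (z - v)) ⁻¹' S := by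
  ext z
  simp only [Set.mem_image, Set.mem_preimage, aff]
  constructor
  · rintro ⟨y, hy, rfl⟩
    rwa [add_sub_cancel_left, smul_smul, inv_mul_cancel₀ hc, one_smul]
  · intro hz
    exact ⟨c⁻¹ • (z - v), hz, by rw [smul_smul, mul_inv_cancel₀ hc, one_smul]; abel⟩

lemma aff_meas (v : E2) {c : ℝ} (hc : c ≠ 0) (S : Set E2) (hS : MeasurableSet S) :
    MeasurableSet (aff v c '' S) := by
  rw [aff_image_eq_preimage v hc]
  exact ((measurable_id.sub_const v).const_smul c⁻¹) hS

lemma aff_vol (v : E2) (c : ℝ) (S : Set E2) :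
    volume (aff v c '' S) = ENNReal.ofReal (c ^ 2) * volume S := by
  have h1 : aff v c '' S = (fun z => v + z) '' (c • S) := by
    rw [← Set.image_smul, ← Set.image_comp]
    rfl
  rw [h1, Set.image_add_left, measure_preimage_add, Measure.addHaar_smul,
    finrank_euclideanSpace]
  congr 2
  rw [Fintype.card_fin]
  rw [abs_of_nonneg (by positivity)]

lemma aff_ball (v : E2) {c : ℝ} (hc : c ≠ 0) (a : E2) {r : ℝ} (hr : 0 ≤ r) :
    aff v c '' closedBall a r = closedBall (aff v c a) (|c| * r) := by
  have h1 : aff v c '' closedBall a r = (fun z => v + z) '' (c • closedBall a r) := by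
    rw [← Set.image_smul, ← Set.image_comp]
    rfl
  rw [h1, _root_.smul_closedBall c a hr]
  have h2 : (fun z => v + z) '' closedBall (c • a) (‖c‖ * r) =
      v +ᵥ closedBall (c • a) (‖c‖ * r) := by
    rw [← Set.image_vadd]
    rfl
  rw [h2, vadd_closedBall, Real.norm_eq_abs]
  rfl

-- (E4) density transfer under affine maps
lemma density_aff (v : E2) {c : ℝ} (hc : c ≠ 0) (A : Set E2) (a : E2)
    (hd : Tendsto (fun r : ℝ => volume (A ∩ closedBall a r) / volume (closedBall a r))
      (𝓝[>] 0) (𝓝 1)) :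
    Tendsto (fun r : ℝ =>
        volume ((aff v c '' A) ∩ closedBall (aff v c a) r) /
          volume (closedBall (aff v c a) r))
      (𝓝[>] 0) (𝓝 1) := by
  have habs : (0:ℝ) < |c| := abs_pos.mpr hc
  have hmap : Tendsto (fun r : ℝ => r / |c|) (𝓝[>] 0) (𝓝[>] 0) := by
    rw [tendsto_nhdsWithin_iff]
    constructor
    · have : Tendsto (fun r : ℝ => r / |c|) (𝓝 0) (𝓝 (0 / |c|)) :=
        (tendsto_id.div_const _)
      rw [zero_div] at this
      exact this.mono_left nhdsWithin_le_nhds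
    · filter_upwards [eventually_mem_nhdsWithin] with r hr
      exact div_pos hr habs
  have hcomp := hd.comp hmap
  refine hcomp.congr' ?_
  filter_upwards [eventually_mem_nhdsWithin] with r hr
  have hr0 : (0:ℝ) < r := hr
  have hrc : 0 ≤ r / |c| := by positivity
  have hball : closedBall (aff v c a) r = aff v c '' closedBall a (r / |c|) := by
    rw [aff_ball v hc a hrc]
    congr 1
    field_simp
  have hint : (aff v c '' A) ∩ closedBall (aff v c a) r
      = aff v c '' (A ∩ closedBall a (r / |c|)) := by
    rw [hball, Set.image_inter (aff_inj v hc)]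
  have hk0 : ENNReal.ofReal (c ^ 2) ≠ 0 := by
    simp only [ne_eq, ENNReal.ofReal_eq_zero, not_le]
    positivity
  show volume (A ∩ closedBall a (r / |c|)) / volume (closedBall a (r / |c|))
      = volume ((aff v c '' A) ∩ closedBall (aff v c a) r) / volume (closedBall (aff v c a) r)
  rw [hint, hball, aff_vol, aff_vol,
    ENNReal.mul_div_mul_left _ _ hk0 ENNReal.ofReal_ne_top]

-- (E5) two sets with density 1 at a common point intersect in positive measure
lemma inter_pos (E F : Set E2) (hE : MeasurableSet E) (hF : MeasurableSet F) (c : E2)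
    (hdE : Tendsto (fun r : ℝ => volume (E ∩ closedBall c r) / volume (closedBall c r))
      (𝓝[>] 0) (𝓝 1))
    (hdF : Tendsto (fun r : ℝ => volume (F ∩ closedBall c r) / volume (closedBall c r))
      (𝓝[>] 0) (𝓝 1)) :
    0 < volume (E ∩ F) := by
  have hhalf : ENNReal.ofReal (1/2) < 1 := by
    rw [← ENNReal.ofReal_one]
    exact ENNReal.ofReal_lt_ofReal_iff_of_nonneg (by norm_num) |>.mpr (by norm_num)
  have hE' := hdE.eventually (eventually_gt_nhds hhalf)
  have hF' := hdF.eventually (eventually_gt_nhds hhalf)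
  obtain ⟨r, ⟨⟨hrE, hrF⟩, hr0⟩⟩ := ((hE'.and hF').and eventually_mem_nhdsWithin).exists
  have hr0' : (0:ℝ) < r := hr0
  set b := volume (closedBall c r) with hb
  have hb0 : 0 < b := measure_closedBall_pos volume c hr0'
  have hbt : b < ⊤ := measure_closedBall_lt_top
  have hXE : ENNReal.ofReal (1/2) * b < volume (E ∩ closedBall c r) :=
    (ENNReal.lt_div_iff_mul_lt (Or.inl hb0.ne') (Or.inl hbt.ne)).mp hrE
  have hXF : ENNReal.ofReal (1/2) * b < volume (F ∩ closedBall c r) :=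
    (ENNReal.lt_div_iff_mul_lt (Or.inl hb0.ne') (Or.inl hbt.ne)).mp hrF
  rw [pos_iff_ne_zero]
  intro h0
  have hIZ : volume ((E ∩ closedBall c r) ∩ (F ∩ closedBall c r)) = 0 := by
    apply le_antisymm _ (zero_le)
    rw [← h0]
    apply measure_mono
    exact fun x hx => ⟨hx.1.1, hx.2.1⟩
  have hkey := measure_union_add_inter (μ := volume) (t := F ∩ closedBall c r)
    (E ∩ closedBall c r) (hF.inter measurableSet_closedBall)
  rw [hIZ, add_zero] at hkey
  have hlt : b < volume ((E ∩ closedBall c r) ∪ (F ∩ closedBall c r)) := by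
    rw [hkey]
    calc b = 1 * b := (one_mul b).symm
      _ = (ENNReal.ofReal (1/2) + ENNReal.ofReal (1/2)) * b := by
          rw [← ENNReal.ofReal_add (by norm_num) (by norm_num)]
          norm_num
      _ = ENNReal.ofReal (1/2) * b + ENNReal.ofReal (1/2) * b := by ring
      _ < volume (E ∩ closedBall c r) + volume (F ∩ closedBall c r) :=
          ENNReal.add_lt_add hXE hXF
  have hle : volume ((E ∩ closedBall c r) ∪ (F ∩ closedBall c r)) ≤ b :=
    measure_mono (Set.union_subset (Set.inter_subset_right) (Set.inter_subset_right))
  exact absurd (hlt.trans_le hle) (lt_irrefl b)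



lemma evt_mem {t : ℝ} (ht0 : 0 < t) (ht1 : t < 1) (A B : Set E2) (Aν Bν : ℕ → Set E2)
    (hAm : MeasurableSet A) (hBm : MeasurableSet B)
    (hΔA : Tendsto (fun ν => volume (symmDiff (Aν ν) A)) atTop (𝓝 0))
    (hΔB : Tendsto (fun ν => volume (symmDiff (Bν ν) B)) atTop (𝓝 0))
    (hALeb : ∀ x ∈ A, Tendsto (fun r : ℝ =>
        volume (A ∩ closedBall x r) / volume (closedBall x r)) (𝓝[>] 0) (𝓝 1))
    (hBLeb : ∀ x ∈ B, Tendsto (fun r : ℝ =>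
        volume (B ∩ closedBall x r) / volume (closedBall x r)) (𝓝[>] 0) (𝓝 1))
    (hAfin : volume A ≠ ⊤)
    (x : E2) (hx : x ∈ t • A + (1 - t) • B) :
    ∀ᶠ ν in atTop, x ∈ t • Aν ν + (1 - t) • Bν ν := by
  have h1t : (0:ℝ) < 1 - t := by linarith
  obtain ⟨u, hu, v, hv, hxeq⟩ := Set.mem_add.mp hx
  obtain ⟨a, haA, rfl⟩ := hu
  obtain ⟨b, hbB, rfl⟩ := hv
  subst hxeq
  set x : E2 := t • a + (1 - t) • b with hxdef
  have hcF : -(1 - t) ≠ 0 := by intro hc; apply h1t.ne'; linarith [neg_eq_zero.mp hc]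
  set E : Set E2 := aff 0 t '' A with hE
  set F : Set E2 := aff x (-(1 - t)) '' B with hF
  set c0 : E2 := t • a with hc0
  have haffa : aff 0 t a = c0 := by simp [aff, hc0]
  have haffb : aff x (-(1 - t)) b = c0 := by
    simp only [aff, hc0, hxdef, neg_smul]
    abel
  have hdE : Tendsto (fun r : ℝ =>
      volume (E ∩ closedBall c0 r) / volume (closedBall c0 r)) (𝓝[>] 0) (𝓝 1) := by
    have := density_aff 0 ht0.ne' A a (hALeb a haA)
    rwa [haffa] at this
  have hdF : Tendsto (fun r : ℝ =>
      volume (F ∩ closedBall c0 r) / volume (closedBall c0 r)) (𝓝[>] 0) (𝓝 1) := by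
    have := density_aff x hcF B b (hBLeb b hbB)
    rwa [haffb] at this
  have hm : 0 < volume (E ∩ F) :=
    inter_pos E F (aff_meas 0 ht0.ne' A hAm) (aff_meas x hcF B hBm) c0 hdE hdF
  -- approximating sets
  set Eν : ℕ → Set E2 := fun ν => aff 0 t '' (Aν ν) with hEν
  set Fν : ℕ → Set E2 := fun ν => aff x (-(1 - t)) '' (Bν ν) with hFν
  have hΔE : Tendsto (fun ν => volume (symmDiff (Eν ν) E)) atTop (𝓝 0) := by
    have heq : ∀ ν, volume (symmDiff (Eν ν) E)
        = ENNReal.ofReal (t ^ 2) * volume (symmDiff (Aν ν) A) := by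
      intro ν
      rw [hEν, hE, ← Set.image_symmDiff (aff_inj 0 ht0.ne'), aff_vol]
    simp_rw [heq]
    have := ENNReal.Tendsto.const_mul hΔA (Or.inr ENNReal.ofReal_ne_top)
      (a := ENNReal.ofReal (t ^ 2))
    simpa using this
  have hΔF : Tendsto (fun ν => volume (symmDiff (Fν ν) F)) atTop (𝓝 0) := by
    have heq : ∀ ν, volume (symmDiff (Fν ν) F)
        = ENNReal.ofReal ((-(1 - t)) ^ 2) * volume (symmDiff (Bν ν) B) := by
      intro ν
      rw [hFν, hF, ← Set.image_symmDiff (aff_inj x hcF), aff_vol]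
    simp_rw [heq]
    have := ENNReal.Tendsto.const_mul hΔB (Or.inr ENNReal.ofReal_ne_top)
      (a := ENNReal.ofReal ((-(1 - t)) ^ 2))
    simpa using this
  have hsum : Tendsto (fun ν => volume (symmDiff (Eν ν) E) + volume (symmDiff (Fν ν) F))
      atTop (𝓝 0) := by
    have := hΔE.add hΔF
    simpa using this
  filter_upwards [hsum.eventually (eventually_lt_nhds hm)] with ν hν
  have hpos : volume (Eν ν ∩ Fν ν) ≠ 0 := by
    intro h0
    have hincl : E ∩ F ⊆ (Eν ν ∩ Fν ν) ∪ (symmDiff (Eν ν) E ∪ symmDiff (Fν ν) F) := by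
      rintro z ⟨hzE, hzF⟩
      by_cases hz1 : z ∈ Eν ν
      · by_cases hz2 : z ∈ Fν ν
        · exact Or.inl ⟨hz1, hz2⟩
        · exact Or.inr (Or.inr (Set.mem_symmDiff.mpr (Or.inr ⟨hzF, hz2⟩)))
      · exact Or.inr (Or.inl (Set.mem_symmDiff.mpr (Or.inr ⟨hzE, hz1⟩)))
    have hchain : volume (E ∩ F) ≤ volume (Eν ν ∩ Fν ν)
        + (volume (symmDiff (Eν ν) E) + volume (symmDiff (Fν ν) F)) := by
      refine (measure_mono hincl).trans ?_
      refine (measure_union_le _ _).trans ?_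
      exact add_le_add_right (measure_union_le _ _) _
    rw [h0, zero_add] at hchain
    exact absurd (hchain.trans_lt hν) (lt_irrefl _)
  obtain ⟨z, hzE, hzF⟩ := nonempty_of_measure_ne_zero hpos
  obtain ⟨aa, haa, hza⟩ := hzE
  obtain ⟨bb, hbb, hzb⟩ := hzF
  have hz1 : z = t • aa := by rw [← hza]; simp [aff]
  have hz2 : z = x + (-(1 - t)) • bb := by rw [← hzb]; rfl
  refine Set.mem_add.mpr ⟨t • aa, Set.smul_mem_smul_set haa,
    (1 - t) • bb, Set.smul_mem_smul_set hbb, ?_⟩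
  rw [← hz1, hz2, neg_smul]
  abel


theorem stmt17 (t : ℝ) (ht : t ∈ Set.Ioo (0:ℝ) 1)
    (A B : Set (EuclideanSpace ℝ (Fin 2)))
    (Aν Bν : ℕ → Set (EuclideanSpace ℝ (Fin 2)))
    (hAνm : ∀ ν, MeasurableSet (Aν ν)) (hBνm : ∀ ν, MeasurableSet (Bν ν))
    (hAm : MeasurableSet A) (hBm : MeasurableSet B)
    (hA1 : Tendsto (fun ν => (volume (Aν ν)).toReal) atTop (𝓝 1))
    (hB1 : Tendsto (fun ν => (volume (Bν ν)).toReal) atTop (𝓝 1))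
    (hS1 : Tendsto (fun ν => (volume (t • Aν ν + (1 - t) • Bν ν)).toReal) atTop (𝓝 1))
    (hAconv : Tendsto (fun ν =>
        eLpNorm ((Aν ν).indicator (fun _ => (1:ℝ)) - A.indicator (fun _ => (1:ℝ))) 2 volume)
      atTop (𝓝 0))
    (hBconv : Tendsto (fun ν =>
        eLpNorm ((Bν ν).indicator (fun _ => (1:ℝ)) - B.indicator (fun _ => (1:ℝ))) 2 volume)
      atTop (𝓝 0))
    -- each of A, B consists entirely of its Lebesgue (density) points:
    (hALeb : ∀ x ∈ A, Tendsto (fun r : ℝ => volume (A ∩ closedBall x r) / volume (closedBall x r))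
      (𝓝[>] 0) (𝓝 1))
    (hBLeb : ∀ x ∈ B, Tendsto (fun r : ℝ => volume (B ∩ closedBall x r) / volume (closedBall x r))
      (𝓝[>] 0) (𝓝 1)) :
    volume (t • A + (1 - t) • B) = 1 := by
  obtain ⟨ht0, ht1⟩ := ht
  have hΔA := symm_tendsto A Aν hAm hAνm hAconv
  have hΔB := symm_tendsto B Bν hBm hBνm hBconv
  have hA1' : volume A = 1 := vol_eq_one A Aν hA1 hΔA
  have hB1' : volume B = 1 := vol_eq_one B Bν hB1 hΔB
  have hlow : 1 ≤ volume (t • A + (1 - t) • B) := lower_bound ht0 ht1 A B hAm hBm hA1' hB1'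
  have hAfin : volume A ≠ ⊤ := by rw [hA1']; exact ENNReal.one_ne_top
  have hmem : ∀ x ∈ t • A + (1 - t) • B, ∀ᶠ ν in atTop, x ∈ t • Aν ν + (1 - t) • Bν ν :=
    fun x hx => evt_mem ht0 ht1 A B Aν Bν hAm hBm hΔA hΔB hALeb hBLeb hAfin x hx
  set T : ℕ → Set E2 := fun N => ⋂ (ν : ℕ) (_ : N ≤ ν), (t • Aν ν + (1 - t) • Bν ν) with hT
  have hTmono : Monotone T := by
    intro N M hNM x hx
    exact Set.mem_iInter₂.mpr fun ν hν => Set.mem_iInter₂.mp hx ν (hNM.trans hν)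
  have hsub : t • A + (1 - t) • B ⊆ ⋃ N, T N := by
    intro x hx
    obtain ⟨N, hN⟩ := eventually_atTop.mp (hmem x hx)
    exact Set.mem_iUnion.mpr ⟨N, Set.mem_iInter₂.mpr hN⟩
  have hSfin : ∀ᶠ ν in atTop, volume (t • Aν ν + (1 - t) • Bν ν) ≠ ⊤ := by
    filter_upwards [hS1.eventually (eventually_gt_nhds (by norm_num : (1/2:ℝ) < 1))] with ν hν
    intro htop
    rw [htop] at hν
    norm_num at hν
  have hupper : volume (t • A + (1 - t) • B) ≤ 1 := by
    refine le_trans (measure_mono hsub) ?_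
    rw [hTmono.measure_iUnion]
    refine iSup_le fun N => ?_
    apply ENNReal.le_of_forall_pos_le_add
    intro ε hε _
    have hev : ∀ᶠ ν in atTop,
        (volume (t • Aν ν + (1 - t) • Bν ν)).toReal < 1 + ε := by
      refine hS1.eventually (eventually_lt_nhds ?_)
      have : (0:ℝ) < ε := hε
      linarith
    obtain ⟨ν, hνN, hν1, hν2⟩ : ∃ ν, N ≤ ν ∧
        (volume (t • Aν ν + (1 - t) • Bν ν)).toReal < 1 + ε ∧
        volume (t • Aν ν + (1 - t) • Bν ν) ≠ ⊤ := by
      obtain ⟨ν, h1, h2, h3⟩ := ((eventually_ge_atTop N).and (hev.and hSfin)).exists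
      exact ⟨ν, h1, h2, h3⟩
    calc volume (T N) ≤ volume (t • Aν ν + (1 - t) • Bν ν) :=
          measure_mono (Set.iInter₂_subset ν hνN)
      _ = ENNReal.ofReal ((volume (t • Aν ν + (1 - t) • Bν ν)).toReal) :=
          (ENNReal.ofReal_toReal hν2).symm
      _ ≤ ENNReal.ofReal (1 + ε) := ENNReal.ofReal_le_ofReal hν1.le
      _ = 1 + (ε : ℝ≥0∞) := by
          rw [ENNReal.ofReal_add (by norm_num) ε.coe_nonneg, ENNReal.ofReal_one,
            ENNReal.ofReal_coe_nnreal]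
  exact le_antisymm hupper hlow
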